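/- arXiv:1707.08367 — 3 statements merged into one kernel-verified Lean document; each statement's English description precedes it below -/
import Mathlib

section
/- Let p, q be real (or elements of a commutative ring) with a = q^{ℓ₁}p^{ℓ₂}, ℓ = ℓ₁+ℓ₂ ≥ 2, m₁ = k₁−ℓ₁+1 ≥ 1. In the formal power series ring R[t][[z]], the series Φ(t,z) = 1/(1 − z − a·zˡ·(t−1)·(1 − (qz)^{m₁})) satisfies Φ(t,z) = Σ_{u≥0} Σ_{v≥0} multinomialCoeff(n−u(ℓ−1)−v(ℓ+m₁−1); n−uℓ−v(ℓ+m₁), u, v) · (−1)ᵛ · q^{v·m₁} · (a(t−1))^{u+v} · zⁿ summed over all n, u, v with uℓ + v(ℓ+m₁) ≤ n, i.e., the coefficient of zⁿ in Φ(t,z) equals Σ_{u=0}^{⌊n/ℓ⌋} Σ_{v=0}^{⌊(n−uℓ)/(ℓ+m₁)⌋} (n−u(ℓ−1)−v(ℓ+m₁−1))!/((n−uℓ−v(ℓ+m₁))!·u!·v!) · (−1)ᵛ q^{v m₁} (a(t−1))^{u+v}. -/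
open PowerSeries Finset

section
variable {M : Type*} [AddCommMonoid M]

lemma sum_ite_shift (n c : ℕ) (f : ℕ → M) :
    (∑ m ∈ range (n+1), if m + c = n then f m else 0)
      = if c ≤ n then f (n - c) else 0 := by
  by_cases h : c ≤ n
  · rw [if_pos h, Finset.sum_eq_single (n - c)]
    · rw [if_pos (by omega)]
    · intro b _ hb; rw [if_neg (by omega)]
    · intro hmem; exact absurd (mem_range.mpr (by omega)) hmem
  · rw [if_neg h]
    exact Finset.sum_eq_zero fun m hm => if_neg (by simp only [mem_range] at hm; omega)

lemma multinom (N j v : ℕ) (hv : v ≤ j) (hj : j ≤ N) :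
    N.factorial / ((N - j).factorial * (j - v).factorial * v.factorial)
      = N.choose j * j.choose v := by
  have h1 := Nat.choose_mul_factorial_mul_factorial hj
  have h2 := Nat.choose_mul_factorial_mul_factorial hv
  refine Nat.div_eq_of_eq_mul_left
    (Nat.mul_pos (Nat.mul_pos (Nat.factorial_pos _) (Nat.factorial_pos _)) (Nat.factorial_pos _)) ?_
  calc N.factorial = N.choose j * j.factorial * (N-j).factorial := h1.symm
    _ = N.choose j * (j.choose v * v.factorial * (j-v).factorial) * (N-j).factorial := by rw [h2]
    _ = _ := by ring

lemma range_div_inner (n a L : ℕ) (hL : 0 < L) (ha : a ≤ n) (f : ℕ → M) :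
    (∑ v ∈ range (n+1), if a + v*L ≤ n then f v else 0)
      = ∑ v ∈ range ((n-a)/L + 1), if a + v*L ≤ n then f v else 0 := by
  refine (Finset.sum_subset (Finset.range_subset_range.mpr (by
    have := Nat.div_le_self (n - a) L; omega)) ?_).symm
  intro v _ hv
  rw [mem_range, not_lt] at hv
  refine if_neg fun hle => ?_
  have h1 : v * L ≤ n - a := Nat.le_sub_of_add_le (by omega)
  have h2 : v ≤ (n - a) / L := (Nat.le_div_iff_mul_le hL).mpr h1
  omega

lemma range_div_outer (n ℓ : ℕ) (hp : 0 < ℓ) (g : ℕ → M) (hg : ∀ u, n < u * ℓ → g u = 0) :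
    (∑ u ∈ range (n+1), g u) = ∑ u ∈ range (n/ℓ + 1), g u := by
  refine (Finset.sum_subset (Finset.range_subset_range.mpr (by
    have := Nat.div_le_self n ℓ; omega)) ?_).symm
  intro u _ hu
  rw [mem_range, not_lt] at hu
  exact hg u ((Nat.div_lt_iff_lt_mul hp).mp (by omega))

end

lemma arith1 (ℓ L m j v : ℕ) (h2 : 2 ≤ ℓ) (hL : ℓ ≤ L) (hv : v ≤ j) (hj : j ≤ m) :
    (m - j) + (ℓ*(j-v) + L*v) = m + ((ℓ-1)*j + (L-ℓ)*v) := by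
  obtain ⟨e, rfl⟩ : ∃ e, ℓ = e + 2 := ⟨ℓ - 2, by omega⟩
  obtain ⟨d, rfl⟩ : ∃ d, L = (e + 2) + d := ⟨L - (e+2), by omega⟩
  obtain ⟨u, rfl⟩ := Nat.exists_eq_add_of_le hv
  obtain ⟨w, rfl⟩ := Nat.exists_eq_add_of_le hj
  have e1 : v + u - v = u := by omega
  have e2 : v + u + w - (v + u) = w := by omega
  have e3 : e + 2 - 1 = e + 1 := by omega
  have e4 : e + 2 + d - (e + 2) = d := by omega
  rw [e1, e2, e3, e4]
  ring

lemma coeff_w_pow {R : Type*} [CommRing R] (A B : R) (ℓ L n m : ℕ) :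
    (coeff n) ((X + C A * X^ℓ + C B * X^L)^m) =
      ∑ j ∈ range (m+1), ∑ v ∈ range (j+1),
        if (m - j) + (ℓ*(j-v) + L*v) = n
          then (m.choose j * j.choose v) • (A^(j-v) * B^v) else 0 := by
  have hexp : (X + C A * X^ℓ + C B * X^L)^m
      = ∑ j ∈ range (m+1), ∑ v ∈ range (j+1),
        (m.choose j * j.choose v) •
          (C (A^(j-v) * B^v) * X ^ ((m - j) + (ℓ*(j-v) + L*v))) := by
    rw [show X + C A * X^ℓ + C B * X^L = (C B * X^L + C A * X^ℓ) + X by ring, add_pow]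
    refine Finset.sum_congr rfl fun j hj => ?_
    rw [add_pow, Finset.sum_mul, Finset.sum_mul]
    refine Finset.sum_congr rfl fun v hv => ?_
    simp only [mul_pow, ← map_pow, ← map_mul, nsmul_eq_mul, ← pow_mul]
    push_cast
    ring_nf
    rw [map_mul]
    ring
  rw [hexp, map_sum]
  refine Finset.sum_congr rfl fun j _ => ?_
  rw [map_sum]
  refine Finset.sum_congr rfl fun v _ => ?_
  rw [map_nsmul, coeff_C_mul, coeff_X_pow]
  by_cases h : (m - j) + (ℓ*(j-v) + L*v) = n
  · rw [if_pos h, if_pos h.symm, mul_one]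
  · rw [if_neg h, if_neg (fun hh => h hh.symm), mul_zero, smul_zero]

section
variable {M : Type*} [AddCommMonoid M]

lemma reindex_sum (n : ℕ) (F : ℕ → ℕ → M)
    (hzero : ∀ j v, v ≤ n → (j < v ∨ n < j) → F j v = 0) :
    (∑ j ∈ range (n+1), ∑ v ∈ range (n+1), F j v)
      = ∑ v ∈ range (n+1), ∑ u ∈ range (n+1), F (v+u) v := by
  rw [Finset.sum_comm]
  refine Finset.sum_congr rfl fun v hv => ?_
  have hv' : v ≤ n := mem_range_succ_iff.mp hv
  calc (∑ j ∈ range (n+1), F j v)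
      = ∑ j ∈ Finset.Ico 0 (n+1), F j v := by rw [Finset.range_eq_Ico]
    _ = (∑ j ∈ Finset.Ico 0 v, F j v) + ∑ j ∈ Finset.Ico v (n+1), F j v :=
        (Finset.sum_Ico_consecutive _ (Nat.zero_le v) (by omega)).symm
    _ = ∑ j ∈ Finset.Ico v (n+1), F j v := by
        rw [Finset.sum_eq_zero, zero_add]
        intro j hj
        exact hzero j v hv' (Or.inl (Finset.mem_Ico.mp hj).2)
    _ = ∑ u ∈ range (n+1-v), F (v+u) v := Finset.sum_Ico_eq_sum_range _ _ _
    _ = ∑ u ∈ range (n+1), F (v+u) v := by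
        refine Finset.sum_subset (Finset.range_subset_range.mpr (by omega)) ?_
        intro u _ hu
        rw [mem_range, not_lt] at hu
        exact hzero (v+u) v hv' (Or.inr (by omega))

end

lemma pointwise_conv {R : Type*} [CommRing R] (A B : R) (ℓ L n u v : ℕ)
    (h2 : 2 ≤ ℓ) (hL : ℓ < L) :
    (if (ℓ-1)*(v+u) + (L-ℓ)*v ≤ n
      then ((n - ((ℓ-1)*(v+u) + (L-ℓ)*v)).choose (v+u) * (v+u).choose v) • (A^((v+u)-v) * B^v)
      else 0)
    = if u*ℓ + v*L ≤ n
      then ((n - u*(ℓ-1) - v*(L-1)).factorial /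
        ((n - u*ℓ - v*L).factorial * u.factorial * v.factorial)) • (A^u * B^v)
      else 0 := by
  have hA : v + u - v = u := by omega
  have hcq : (ℓ-1)*(v+u) + (L-ℓ)*v = u*(ℓ-1) + v*(L-1) := by
    have h3 : (ℓ-1) + (L-ℓ) = L - 1 := by omega
    calc (ℓ-1)*(v+u) + (L-ℓ)*v = u*(ℓ-1) + v*((ℓ-1)+(L-ℓ)) := by ring
      _ = _ := by rw [h3]
  have hu : u * ℓ = u*(ℓ-1) + u := by
    calc u*ℓ = u*((ℓ-1)+1) := by rw [Nat.sub_add_cancel (by omega : 1 ≤ ℓ)]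
      _ = u*(ℓ-1)+u := by ring
  have hvL : v * L = v*(L-1) + v := by
    calc v*L = v*((L-1)+1) := by rw [Nat.sub_add_cancel (by omega : 1 ≤ L)]
      _ = v*(L-1)+v := by ring
  have hsum : u*ℓ + v*L = (v+u) + (u*(ℓ-1) + v*(L-1)) := by rw [hu, hvL]; ring
  by_cases h : u*ℓ + v*L ≤ n
  · have hcn : u*(ℓ-1) + v*(L-1) ≤ n :=
      le_trans (add_le_add (Nat.mul_le_mul_left u (Nat.sub_le ℓ 1))
        (Nat.mul_le_mul_left v (Nat.sub_le L 1))) h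
    have hjN : v + u ≤ n - (u*(ℓ-1) + v*(L-1)) :=
      (Nat.le_sub_iff_add_le hcn).mpr (by omega)
    rw [if_pos (by rw [hcq]; exact hcn), if_pos h, hcq, hA]
    have hN : n - u*(ℓ-1) - v*(L-1) = n - (u*(ℓ-1) + v*(L-1)) := Nat.sub_sub _ _ _
    have hs : (n - (u*(ℓ-1) + v*(L-1))) - (v+u) = n - u*ℓ - v*L := by
      rw [Nat.sub_sub, Nat.sub_sub]
      congr 1
      rw [hsum]
      ring
    congr 1
    rw [hN]
    have hm := multinom (n - (u*(ℓ-1)+v*(L-1))) (v+u) v (by omega) hjN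
    rw [hs, hA] at hm
    exact hm.symm
  · rw [if_neg h]
    push_neg at h
    by_cases hcc : (ℓ-1)*(v+u) + (L-ℓ)*v ≤ n
    · rw [if_pos hcc]
      have hlt : n - ((ℓ-1)*(v+u) + (L-ℓ)*v) < v + u := by
        by_contra hge
        push_neg at hge
        have := (Nat.le_sub_iff_add_le hcc).mp hge
        rw [hcq] at this
        omega
      simp [Nat.choose_eq_zero_of_lt hlt]
    · rw [if_neg hcc]

lemma coeff_geom_sum {R : Type*} [CommRing R] (A B : R) (ℓ L : ℕ)
    (h2 : 2 ≤ ℓ) (hL : ℓ < L) (n : ℕ) :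
    (coeff n) (∑ m ∈ range (n+1), (X + C A * X^ℓ + C B * X^L)^m) =
      ∑ u ∈ range (n/ℓ + 1), ∑ v ∈ range ((n - u*ℓ)/L + 1),
        ((n - u*(ℓ-1) - v*(L-1)).factorial /
          ((n - u*ℓ - v*L).factorial * u.factorial * v.factorial)) • (A^u * B^v) := by
  have hℓpos : 0 < ℓ := by omega
  have hLpos : 0 < L := by omega
  -- Step A : extended triple sum with normalized exponent
  have stepA : (coeff n) (∑ m ∈ range (n+1), (X + C A * X^ℓ + C B * X^L)^m)
      = ∑ m ∈ range (n+1), ∑ j ∈ range (n+1), ∑ v ∈ range (n+1),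
          (if m + ((ℓ-1)*j + (L-ℓ)*v) = n
            then (m.choose j * j.choose v) • (A^(j-v) * B^v) else 0) := by
    rw [map_sum]
    refine Finset.sum_congr rfl fun m hm => ?_
    have hm' : m ≤ n := mem_range_succ_iff.mp hm
    rw [coeff_w_pow]
    calc (∑ j ∈ range (m+1), ∑ v ∈ range (j+1),
            if (m - j) + (ℓ*(j-v) + L*v) = n
              then (m.choose j * j.choose v) • (A^(j-v) * B^v) else 0)
        = ∑ j ∈ range (m+1), ∑ v ∈ range (n+1),
            (if (m - j) + (ℓ*(j-v) + L*v) = n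
              then (m.choose j * j.choose v) • (A^(j-v) * B^v) else 0) := by
          refine Finset.sum_congr rfl fun j hj => ?_
          have hj' : j ≤ m := mem_range_succ_iff.mp hj
          refine Finset.sum_subset (Finset.range_subset_range.mpr (by omega)) ?_
          intro v _ hv
          rw [mem_range, not_lt] at hv
          simp [Nat.choose_eq_zero_of_lt (show j < v by omega)]
      _ = ∑ j ∈ range (n+1), ∑ v ∈ range (n+1),
            (if (m - j) + (ℓ*(j-v) + L*v) = n
              then (m.choose j * j.choose v) • (A^(j-v) * B^v) else 0) := by
          refine Finset.sum_subset (Finset.range_subset_range.mpr (by omega)) ?_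
          intro j _ hj
          rw [mem_range, not_lt] at hj
          refine Finset.sum_eq_zero fun v _ => ?_
          simp [Nat.choose_eq_zero_of_lt (show m < j by omega)]
      _ = ∑ j ∈ range (n+1), ∑ v ∈ range (n+1),
            (if m + ((ℓ-1)*j + (L-ℓ)*v) = n
              then (m.choose j * j.choose v) • (A^(j-v) * B^v) else 0) := by
          refine Finset.sum_congr rfl fun j _ => Finset.sum_congr rfl fun v _ => ?_
          by_cases hc : v ≤ j ∧ j ≤ m
          · rw [arith1 ℓ L m j v h2 hL.le hc.1 hc.2]
          · have hzero : m.choose j * j.choose v = 0 := by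
              rcases not_and_or.mp hc with hc | hc
              · rw [Nat.choose_eq_zero_of_lt (show j < v by omega), mul_zero]
              · rw [Nat.choose_eq_zero_of_lt (show m < j by omega), zero_mul]
            simp [hzero]
  rw [stepA]
  -- Step B : collapse the sum over m
  have stepB : (∑ m ∈ range (n+1), ∑ j ∈ range (n+1), ∑ v ∈ range (n+1),
          (if m + ((ℓ-1)*j + (L-ℓ)*v) = n
            then (m.choose j * j.choose v) • (A^(j-v) * B^v) else 0))
      = ∑ j ∈ range (n+1), ∑ v ∈ range (n+1),
          (if (ℓ-1)*j + (L-ℓ)*v ≤ n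
            then ((n - ((ℓ-1)*j + (L-ℓ)*v)).choose j * j.choose v) • (A^(j-v) * B^v)
            else 0) := by
    rw [Finset.sum_comm]
    refine Finset.sum_congr rfl fun j _ => ?_
    rw [Finset.sum_comm]
    refine Finset.sum_congr rfl fun v _ => ?_
    exact sum_ite_shift n ((ℓ-1)*j + (L-ℓ)*v)
      (fun m => (m.choose j * j.choose v) • (A^(j-v) * B^v))
  rw [stepB]
  -- Step C : reindex j = v + u
  rw [reindex_sum n _ ?hz]
  case hz =>
    intro j v hv hor
    rcases hor with hlt | hlt
    · simp [Nat.choose_eq_zero_of_lt hlt]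
    · by_cases hcc : (ℓ-1)*j + (L-ℓ)*v ≤ n
      · have : n - ((ℓ-1)*j + (L-ℓ)*v) < j := by
          have := Nat.sub_le n ((ℓ-1)*j + (L-ℓ)*v)
          omega
        simp [Nat.choose_eq_zero_of_lt this]
      · rw [if_neg hcc]
  -- Step D : pointwise conversion and range shrinking
  have stepD : (∑ v ∈ range (n+1), ∑ u ∈ range (n+1),
        (if (ℓ-1)*(v+u) + (L-ℓ)*v ≤ n
          then ((n - ((ℓ-1)*(v+u) + (L-ℓ)*v)).choose (v+u) * (v+u).choose v) • (A^((v+u)-v) * B^v)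
          else 0))
      = ∑ v ∈ range (n+1), ∑ u ∈ range (n+1),
        (if u*ℓ + v*L ≤ n
          then ((n - u*(ℓ-1) - v*(L-1)).factorial /
            ((n - u*ℓ - v*L).factorial * u.factorial * v.factorial)) • (A^u * B^v)
          else 0) :=
    Finset.sum_congr rfl fun v _ => Finset.sum_congr rfl fun u _ =>
      pointwise_conv A B ℓ L n u v h2 hL
  rw [stepD, Finset.sum_comm]
  rw [range_div_outer n ℓ hℓpos _ ?houter]
  case houter =>
    intro u hu
    refine Finset.sum_eq_zero fun v _ => ?_
    exact if_neg fun hle => absurd (le_trans (Nat.le_add_right _ _) hle) (not_le.mpr hu)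
  refine Finset.sum_congr rfl fun u hu => ?_
  have hun : u * ℓ ≤ n := (Nat.le_div_iff_mul_le hℓpos).mp (mem_range_succ_iff.mp hu)
  rw [range_div_inner n (u*ℓ) L hLpos hun]
  refine Finset.sum_congr rfl fun v hv => ?_
  have hv' : v ≤ (n - u*ℓ)/L := mem_range_succ_iff.mp hv
  have hvn : v * L ≤ n - u*ℓ := (Nat.le_div_iff_mul_le hLpos).mp hv'
  exact if_pos (by have := (Nat.le_sub_iff_add_le hun).mp hvn; omega)




/-- Explicit form of the coefficients of the double PGF
`Φ(t,z) = 1 / (1 - z - a z^ℓ (t-1)(1-(qz)^{m₁}))` with `a = q^{ℓ₁} p^{ℓ₂}`,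
`ℓ = ℓ₁+ℓ₂`, `m₁ = k₁-ℓ₁+1`, as formal power series over `ℝ[t]`. -/
theorem stmt_1 (p q : ℝ) (ℓ₁ ℓ₂ k₁ : ℕ) (hℓ₁ : 1 ≤ ℓ₁) (hℓ₂ : 1 ≤ ℓ₂) (hk₁ : ℓ₁ ≤ k₁)
    (Φ : PowerSeries (Polynomial ℝ))
    (hΦ : Φ * (1 - PowerSeries.X -
      PowerSeries.C (Polynomial.C (q ^ ℓ₁ * p ^ ℓ₂) * (Polynomial.X - 1)) *
        PowerSeries.X ^ (ℓ₁ + ℓ₂) *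
        (1 - (PowerSeries.C (Polynomial.C q) * PowerSeries.X) ^ (k₁ - ℓ₁ + 1)))
      = 1) :
    ∀ n : ℕ, (PowerSeries.coeff n) Φ =
      ∑ u ∈ Finset.range (n / (ℓ₁ + ℓ₂) + 1),
        ∑ v ∈ Finset.range ((n - u * (ℓ₁ + ℓ₂)) / ((ℓ₁ + ℓ₂) + (k₁ - ℓ₁ + 1)) + 1),
          (Nat.factorial (n - u * (ℓ₁ + ℓ₂ - 1) - v * ((ℓ₁ + ℓ₂) + (k₁ - ℓ₁ + 1) - 1)) /
            (Nat.factorial (n - u * (ℓ₁ + ℓ₂) - v * ((ℓ₁ + ℓ₂) + (k₁ - ℓ₁ + 1))) *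
              Nat.factorial u * Nat.factorial v) : ℕ) •
            ((-1 : Polynomial ℝ) ^ v * Polynomial.C (q ^ (v * (k₁ - ℓ₁ + 1))) *
              (Polynomial.C (q ^ ℓ₁ * p ^ ℓ₂) * (Polynomial.X - 1)) ^ (u + v)) := by
  intro n
  set m₁ := k₁ - ℓ₁ + 1 with hm₁
  set Ap : Polynomial ℝ := Polynomial.C (q ^ ℓ₁ * p ^ ℓ₂) * (Polynomial.X - 1) with hAp
  set Bp : Polynomial ℝ := -((Polynomial.C q) ^ m₁ * Ap) with hBp
  set w : PowerSeries (Polynomial ℝ) :=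
    X + C Ap * X ^ (ℓ₁ + ℓ₂) + C Bp * X ^ ((ℓ₁ + ℓ₂) + m₁) with hw
  have hfac : 1 - (X : PowerSeries (Polynomial ℝ)) -
      C Ap * X ^ (ℓ₁ + ℓ₂) *
        (1 - (C (Polynomial.C q) * X) ^ m₁) = 1 - w := by
    rw [hw, hBp]
    simp only [map_neg, map_mul, map_pow]
    ring
  have h1 : Φ * (1 - w) = 1 := by rw [← hfac]; exact hΦ
  have htel : Φ = (∑ m ∈ range (n+1), w^m) + Φ * w^(n+1) := by
    have hgeo : (1 - w) * (∑ m ∈ range (n+1), w^m) = 1 - w^(n+1) := by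
      have hgs := mul_geom_sum w (n+1)
      calc (1 - w) * ∑ m ∈ range (n+1), w^m
          = -((w - 1) * ∑ m ∈ range (n+1), w^m) := by ring
        _ = -(w^(n+1) - 1) := by rw [hgs]
        _ = 1 - w^(n+1) := by ring
    calc Φ = Φ * 1 := (mul_one Φ).symm
      _ = Φ * ((1-w) * ∑ m ∈ range (n+1), w^m) + Φ * w^(n+1) := by rw [hgeo]; ring
      _ = (Φ * (1-w)) * (∑ m ∈ range (n+1), w^m) + Φ * w^(n+1) := by ring
      _ = (∑ m ∈ range (n+1), w^m) + Φ * w^(n+1) := by rw [h1, one_mul]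
  have hℓ0 : ℓ₁ + ℓ₂ ≠ 0 := by omega
  have hL0 : (ℓ₁ + ℓ₂) + m₁ ≠ 0 := by omega
  have hXdvd : (X : PowerSeries (Polynomial ℝ)) ∣ w := by
    rw [PowerSeries.X_dvd_iff, hw]
    simp [zero_pow hℓ0, zero_pow hL0]
  have hzero : (coeff n) (Φ * w^(n+1)) = 0 := by
    have hdvd : (X : PowerSeries (Polynomial ℝ))^(n+1) ∣ Φ * w^(n+1) :=
      Dvd.dvd.mul_left (pow_dvd_pow_of_dvd hXdvd (n+1)) Φ
    exact PowerSeries.X_pow_dvd_iff.mp hdvd n (lt_add_one n)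
  rw [htel, map_add, hzero, add_zero,
    coeff_geom_sum Ap Bp (ℓ₁+ℓ₂) ((ℓ₁+ℓ₂)+m₁) (by omega) (by omega) n]
  refine Finset.sum_congr rfl fun u _ => Finset.sum_congr rfl fun v _ => ?_
  congr 1
  have hBv : Bp ^ v = (-1 : Polynomial ℝ)^v * Polynomial.C (q ^ (v * m₁)) * Ap ^ v := by
    calc Bp ^ v = (-1 : Polynomial ℝ)^v * ((Polynomial.C q) ^ m₁)^v * Ap^v := by
          rw [hBp, neg_pow, mul_pow, ← mul_assoc]
      _ = (-1 : Polynomial ℝ)^v * Polynomial.C (q ^ (v*m₁)) * Ap^v := by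
          rw [← pow_mul, ← map_pow, Nat.mul_comm m₁ v]
  rw [hBv, pow_add]
  ring
end

section
/- In the formal power series ring ℝ[[z]] (with parameter t a real number, |statement as formal identity in ℝ[t][[z]]|), for a = q^{ℓ₁}p^{ℓ₂}, ℓ = ℓ₁+ℓ₂, m₁ = k₁−ℓ₁+1: if Φ(t,z)·(1 − z − a zˡ(t−1)(1−(qz)^{m₁})) = 1, then the coefficients φₙ(t) of Φ satisfy φₙ(t) = φₙ₋₁(t) + a(t−1)[φₙ₋ℓ(t) − q^{m₁}φₙ₋ℓ₋ₘ₁(t)] for all n ≥ ℓ + m₁, and φₙ(t) = 1 for all 0 ≤ n ≤ ℓ−1. -/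
/-- Recursive relation for the coefficients `φₙ(t)` of the double PGF
`Φ(t,z) = 1/(1 - z - a z^ℓ (t-1)(1-(qz)^{m₁}))`, where `a = q^{ℓ₁} p^{ℓ₂}`,
`ℓ = ℓ₁+ℓ₂`, `m₁ = k₁-ℓ₁+1`. -/
theorem stmt_2 (p q : ℝ) (ℓ₁ ℓ₂ k₁ : ℕ) (hℓ₁ : 1 ≤ ℓ₁) (hℓ₂ : 1 ≤ ℓ₂) (hk₁ : ℓ₁ ≤ k₁)
    (Φ : PowerSeries (Polynomial ℝ))
    (hΦ : Φ * (1 - PowerSeries.X -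
      (PowerSeries.C (R := Polynomial ℝ)) (Polynomial.C (q ^ ℓ₁ * p ^ ℓ₂) * (Polynomial.X - 1)) *
        PowerSeries.X ^ (ℓ₁ + ℓ₂) *
        (1 - ((PowerSeries.C (R := Polynomial ℝ)) (Polynomial.C q) * PowerSeries.X) ^ (k₁ - ℓ₁ + 1)))
      = 1) :
    (∀ n : ℕ, (ℓ₁ + ℓ₂) + (k₁ - ℓ₁ + 1) ≤ n →
      (PowerSeries.coeff (R := Polynomial ℝ) n) Φ =
        (PowerSeries.coeff (R := Polynomial ℝ) (n - 1)) Φ +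
          Polynomial.C (q ^ ℓ₁ * p ^ ℓ₂) * (Polynomial.X - 1) *
            ((PowerSeries.coeff (R := Polynomial ℝ) (n - (ℓ₁ + ℓ₂))) Φ -
              Polynomial.C (q ^ (k₁ - ℓ₁ + 1)) *
                (PowerSeries.coeff (R := Polynomial ℝ) (n - (ℓ₁ + ℓ₂) - (k₁ - ℓ₁ + 1))) Φ)) ∧
    (∀ n : ℕ, n ≤ ℓ₁ + ℓ₂ - 1 → (PowerSeries.coeff (R := Polynomial ℝ) n) Φ = 1) := by
  set ℓ := ℓ₁ + ℓ₂ with hℓ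
  set m := k₁ - ℓ₁ + 1 with hm
  set c : Polynomial ℝ := Polynomial.C (q ^ ℓ₁ * p ^ ℓ₂) * (Polynomial.X - 1) with hc
  rw [mul_pow, ← map_pow, ← map_pow] at hΦ
  have h2 : Φ = 1 + Φ * PowerSeries.X ^ 1
      + PowerSeries.C (R := Polynomial ℝ) c * (Φ * PowerSeries.X ^ ℓ)
      - PowerSeries.C (R := Polynomial ℝ) c * PowerSeries.C (R := Polynomial ℝ) (Polynomial.C (q ^ m)) *
        (Φ * PowerSeries.X ^ (ℓ + m)) := by
    linear_combination hΦ
  have key : ∀ n : ℕ, (PowerSeries.coeff (R := Polynomial ℝ) n) Φ =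
      (if n = 0 then 1 else 0)
      + (if 1 ≤ n then (PowerSeries.coeff (R := Polynomial ℝ) (n - 1)) Φ else 0)
      + c * (if ℓ ≤ n then (PowerSeries.coeff (R := Polynomial ℝ) (n - ℓ)) Φ else 0)
      - c * Polynomial.C (q ^ m) *
        (if ℓ + m ≤ n then (PowerSeries.coeff (R := Polynomial ℝ) (n - (ℓ + m))) Φ else 0) := by
    intro n
    conv_lhs => rw [h2]
    simp only [map_add, map_sub, PowerSeries.coeff_one, mul_assoc,
      PowerSeries.coeff_C_mul, PowerSeries.coeff_mul_X_pow', mul_ite, mul_zero]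
  have hℓ2 : 2 ≤ ℓ := by omega
  constructor
  · intro n hn
    rw [key n]
    have h0 : ¬ n = 0 := by omega
    have h1 : 1 ≤ n := by omega
    have h3 : ℓ ≤ n := by omega
    have h4 : ℓ + m ≤ n := by omega
    rw [if_neg h0, if_pos h1, if_pos h3, if_pos h4]
    have : n - (ℓ + m) = n - ℓ - m := by omega
    rw [this]
    ring
  · intro n hn
    induction n with
    | zero =>
      rw [key 0]
      have : ¬ (ℓ ≤ 0) := by omega
      simp [this, show ¬ (ℓ + m ≤ 0) by omega]
    | succ k ih =>
      rw [key (k + 1)]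
      have h3 : ¬ (ℓ ≤ k + 1) := by omega
      have h4 : ¬ (ℓ + m ≤ k + 1) := by omega
      rw [if_neg (by omega : ¬ (k+1) = 0), if_pos (by omega : 1 ≤ k + 1), if_neg h3, if_neg h4,
        Nat.add_sub_cancel, ih (by omega)]
      ring
end

section
/- In ℝ[t][[z]], with a = q^{ℓ₁}p^{ℓ₂}, ℓ = ℓ₁+ℓ₂, m₂ = k₂−ℓ₂+1: if Φ(t,z)·(1 − z − a zˡ(t−1)(1 − (pz)^{m₂})) = 1 − a zˡ(t−1)·Σ_{i=1}^{m₂} (pz)^{i−1}, then the coefficients φₙ(t) of zⁿ in Φ satisfy, for n ≥ ℓ + m₂: φₙ(t) = φₙ₋₁(t) + a(t−1)[φₙ₋ℓ(t) − p^{m₂}φₙ₋ℓ₋ₘ₂(t)], and for ℓ+1 ≤ n ≤ ℓ+m₂−1: φₙ(t) = φₙ₋₁(t) + a(t−1)φₙ₋ℓ(t) − a(t−1)p^{n−ℓ}, and φₙ(t) = 1 for 0 ≤ n ≤ ℓ. -/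
/-- Recursive relations for the coefficients `φₙ(t)` of the double PGF of
`H^n_{ℓ₁,ℓ₂,k₂}`, where `a = q^{ℓ₁} p^{ℓ₂}`, `ℓ = ℓ₁+ℓ₂`, `m₂ = k₂-ℓ₂+1`. -/
theorem stmt_15 (p q : ℝ) (ℓ₁ ℓ₂ k₂ : ℕ) (hℓ₁ : 1 ≤ ℓ₁) (hℓ₂ : 1 ≤ ℓ₂) (hk₂ : ℓ₂ ≤ k₂)
    (Φ : PowerSeries (Polynomial ℝ))
    (hΦ : Φ * (1 - PowerSeries.X -
        PowerSeries.C (Polynomial.C (q ^ ℓ₁ * p ^ ℓ₂) * (Polynomial.X - 1)) *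
          PowerSeries.X ^ (ℓ₁ + ℓ₂) *
          (1 - (PowerSeries.C (Polynomial.C p) * PowerSeries.X) ^ (k₂ - ℓ₂ + 1)))
      = 1 - PowerSeries.C (Polynomial.C (q ^ ℓ₁ * p ^ ℓ₂) * (Polynomial.X - 1)) *
          PowerSeries.X ^ (ℓ₁ + ℓ₂) *
          ∑ i ∈ Finset.range (k₂ - ℓ₂ + 1),
            (PowerSeries.C (Polynomial.C p) * PowerSeries.X) ^ i) :
    (∀ n : ℕ, (ℓ₁ + ℓ₂) + (k₂ - ℓ₂ + 1) ≤ n →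
      (PowerSeries.coeff n) Φ =
        (PowerSeries.coeff (n - 1)) Φ +
          Polynomial.C (q ^ ℓ₁ * p ^ ℓ₂) * (Polynomial.X - 1) *
            ((PowerSeries.coeff (n - (ℓ₁ + ℓ₂))) Φ -
              Polynomial.C (p ^ (k₂ - ℓ₂ + 1)) *
                (PowerSeries.coeff (n - (ℓ₁ + ℓ₂) - (k₂ - ℓ₂ + 1))) Φ)) ∧
    (∀ n : ℕ, (ℓ₁ + ℓ₂) + 1 ≤ n → n ≤ (ℓ₁ + ℓ₂) + (k₂ - ℓ₂ + 1) - 1 →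
      (PowerSeries.coeff n) Φ =
        (PowerSeries.coeff (n - 1)) Φ +
          Polynomial.C (q ^ ℓ₁ * p ^ ℓ₂) * (Polynomial.X - 1) *
            (PowerSeries.coeff (n - (ℓ₁ + ℓ₂))) Φ -
          Polynomial.C (q ^ ℓ₁ * p ^ ℓ₂) * (Polynomial.X - 1) *
            Polynomial.C (p ^ (n - (ℓ₁ + ℓ₂)))) ∧
    (∀ n : ℕ, n ≤ ℓ₁ + ℓ₂ → (PowerSeries.coeff n) Φ = 1) := by
  set ℓ := ℓ₁ + ℓ₂ with hℓdef
  set m := k₂ - ℓ₂ + 1 with hmdef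
  set A : Polynomial ℝ := Polynomial.C (q ^ ℓ₁ * p ^ ℓ₂) * (Polynomial.X - 1) with hAdef
  have hℓ1 : 1 ≤ ℓ := le_trans hℓ₁ (Nat.le_add_right _ _)
  have hm1 : 1 ≤ m := Nat.le_add_left _ _
  have expand1 : Φ * (1 - PowerSeries.X -
        PowerSeries.C A * PowerSeries.X ^ ℓ *
          (1 - (PowerSeries.C (Polynomial.C p) * PowerSeries.X) ^ m))
      = Φ - Φ * PowerSeries.X ^ 1 - PowerSeries.C A * (Φ * PowerSeries.X ^ ℓ)
        + PowerSeries.C (A * Polynomial.C (p ^ m)) * (Φ * PowerSeries.X ^ (ℓ + m)) := by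
    simp only [Polynomial.C_pow, map_mul, map_sub, map_one, map_pow]
    ring
  have expand2 : PowerSeries.C A * PowerSeries.X ^ ℓ *
        ∑ i ∈ Finset.range m, (PowerSeries.C (Polynomial.C p) * PowerSeries.X) ^ i
      = ∑ i ∈ Finset.range m,
          PowerSeries.C (A * Polynomial.C (p ^ i)) * PowerSeries.X ^ (ℓ + i) := by
    rw [Finset.mul_sum]
    refine Finset.sum_congr rfl fun i _ => ?_
    simp only [Polynomial.C_pow, map_mul, map_sub, map_one, map_pow]
    ring
  have key : ∀ n : ℕ,
      PowerSeries.coeff n Φ - (if 1 ≤ n then PowerSeries.coeff (n - 1) Φ else 0)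
        - (if ℓ ≤ n then A * PowerSeries.coeff (n - ℓ) Φ else 0)
        + (if ℓ + m ≤ n then A * Polynomial.C (p ^ m) * PowerSeries.coeff (n - ℓ - m) Φ else 0)
      = (if n = 0 then 1 else 0)
        - ∑ i ∈ Finset.range m, if n = ℓ + i then A * Polynomial.C (p ^ i) else 0 := by
    intro n
    have h := congrArg (PowerSeries.coeff n) hΦ
    rw [expand1, expand2] at h
    simp only [map_sub, map_add, map_sum, PowerSeries.coeff_C_mul,
      PowerSeries.coeff_mul_X_pow', PowerSeries.coeff_one, PowerSeries.coeff_X_pow,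
      mul_ite, mul_one, mul_zero, Nat.sub_sub] at h ⊢
    rw [Finset.sum_congr rfl (fun x (_ : x ∈ Finset.range m) => show
        (if ℓ + x ≤ n then PowerSeries.coeff (n - (ℓ + x))
            (PowerSeries.C (A * Polynomial.C (p ^ x))) else 0)
          = if n = ℓ + x then A * Polynomial.C (p ^ x) else 0 by
      simp only [PowerSeries.coeff_C]
      split_ifs <;> first | rfl | omega)] at h
    linear_combination h
  have base : ∀ n : ℕ, n ≤ ℓ → PowerSeries.coeff n Φ = 1 := by
    intro n
    induction n using Nat.strong_induction_on with
    | _ n ih =>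
      intro hn
      have h := key n
      rcases Nat.lt_or_ge n ℓ with hlt | hge
      · rw [Finset.sum_eq_zero (fun i hi => if_neg (by omega)),
          if_neg (by omega : ¬ ℓ ≤ n), if_neg (by omega : ¬ ℓ + m ≤ n)] at h
        rcases Nat.eq_zero_or_pos n with rfl | hpos
        · rw [if_neg (by omega : ¬ 1 ≤ 0), if_pos rfl] at h
          linear_combination h
        · rw [if_pos (by omega : 1 ≤ n), if_neg (by omega : ¬ n = 0)] at h
          rw [ih (n-1) (by omega) (by omega)] at h
          linear_combination h
      · have hne : n = ℓ := le_antisymm hn hge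
        subst hne
        rw [if_pos hℓ1, if_pos le_rfl, if_neg (by omega : ¬ ℓ + m ≤ ℓ),
          if_neg (by omega : ¬ ℓ = 0),
          Finset.sum_eq_single_of_mem 0 (Finset.mem_range.mpr hm1)
            (fun i _ hne => if_neg (by omega)), if_pos (by omega)] at h
        rw [ih (ℓ-1) (by omega) (by omega), Nat.sub_self,
          ih 0 (by omega) (by omega)] at h
        simp only [pow_zero, Polynomial.C_1, mul_one] at h
        linear_combination h
  refine ⟨?_, ?_, base⟩
  · intro n hn
    have h := key n
    rw [if_pos (by omega : 1 ≤ n), if_pos (by omega : ℓ ≤ n), if_pos hn,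
      if_neg (by omega : ¬ n = 0),
      Finset.sum_eq_zero (fun i hi => if_neg (by
        have := Finset.mem_range.mp hi; omega))] at h
    linear_combination h
  · intro n hn1 hn2
    have h := key n
    rw [if_pos (by omega : 1 ≤ n), if_pos (by omega : ℓ ≤ n),
      if_neg (by omega : ¬ ℓ + m ≤ n), if_neg (by omega : ¬ n = 0),
      Finset.sum_eq_single_of_mem (n - ℓ) (Finset.mem_range.mpr (by omega))
        (fun i hi hne => if_neg (by have := Finset.mem_range.mp hi; omega)),
      if_pos (by omega)] at h
    linear_combination h
end
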